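/- arXiv:2504.09992 — 3 statements merged into one kernel-verified Lean document; each statement's English description precedes it below -/
import Mathlib

section
/- Let α > 0. There exist a constant C₁ > 0 depending only on α and an integer d > 2 such that the following holds: identifying 𝕋 with [0,2π), for every θ > 0 with (d+1)θ < π/2, the intervals I = (0,θ) and J = (dθ, (d+1)θ) satisfy |J| = |I|, and for every nonnegative integrable function g supported in the Carleson box Q_I and every z ∈ Q_J, one has |(K_α g)(z)| ≥ C₁ |Q_I|^{−α/2} ∫_𝔻 g(λ) dA(λ). -/
open MeasureTheory Complex Set
open scoped ENNReal Real

noncomputable section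

/-- The open unit disk in the complex plane. -/
def unitDisk : Set ℂ := Metric.ball 0 1

/-- The normalized area measure `dA = (1/π) dx dy` on `ℂ`. -/
def dA : Measure ℂ := (ENNReal.ofReal π)⁻¹ • (volume : Measure ℂ)

/-- The Carleson box `Q_I` associated with the arc `I = {e^{iθ} : θ ∈ [t, t + ℓ)}`
of the unit circle: `Q_I = {z ∈ 𝔻 : z/|z| ∈ I, 1 - |I| < |z| < 1}`. -/
def carlesonBox (t ℓ : ℝ) : Set ℂ :=
  {z : ℂ | z ∈ unitDisk ∧ 1 - ℓ < ‖z‖ ∧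
    ∃ θ ∈ Set.Ico t (t + ℓ), z / (‖z‖ : ℂ) = Complex.exp (θ * Complex.I)}

/-- The measure `ω dA` restricted to the unit disk, so that
`wMeasure ω S = |S ∩ 𝔻|_ω = ∫_{S ∩ 𝔻} ω dA`. -/
def wMeasure (ω : ℂ → ℝ) : Measure ℂ :=
  (dA.restrict unitDisk).withDensity fun z => ENNReal.ofReal (ω z)

/-- A weight on the unit disk: a positive integrable function. -/
def IsWeight (ω : ℂ → ℝ) : Prop :=
  (∀ z ∈ unitDisk, 0 < ω z) ∧ IntegrableOn ω unitDisk dA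

/-- The integral operator `K_α` induced by the kernel `(1 - z λ̄)^{-α}`. -/
def Kop (α : ℝ) (f : ℂ → ℂ) (z : ℂ) : ℂ :=
  ∫ w in unitDisk, f w * (1 - z * (starRingEnd ℂ) w) ^ (-(α : ℂ)) ∂dA

namespace S4

/-! ### Elementary real-analysis helper lemmas -/

lemma cos_lip (a b : ℝ) : |Real.cos a - Real.cos b| ≤ |a - b| := by
  rw [Real.cos_sub_cos, abs_mul, abs_mul]
  have h1 : |Real.sin ((a - b) / 2)| ≤ |a - b| / 2 := by
    have := Real.abs_sin_le_abs (x := (a - b) / 2)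
    rwa [abs_div, _root_.abs_two] at this
  have h2 : |Real.sin ((a + b) / 2)| ≤ 1 := Real.abs_sin_le_one _
  have h4 : |(-2 : ℝ)| = 2 := by norm_num
  rw [h4]
  nlinarith [abs_nonneg (Real.sin ((a + b) / 2)), abs_nonneg (Real.sin ((a - b) / 2)),
    abs_nonneg (a - b), mul_le_mul h2 h1 (abs_nonneg _) zero_le_one]

lemma sin_lip (a b : ℝ) : |Real.sin a - Real.sin b| ≤ |a - b| := by
  rw [Real.sin_sub_sin, abs_mul, abs_mul]
  have h1 : |Real.sin ((a - b) / 2)| ≤ |a - b| / 2 := by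
    have := Real.abs_sin_le_abs (x := (a - b) / 2)
    rwa [abs_div, _root_.abs_two] at this
  have h2 : |Real.cos ((a + b) / 2)| ≤ 1 := Real.abs_cos_le_one _
  have h4 : |(2 : ℝ)| = 2 := by norm_num
  rw [h4]
  nlinarith [abs_nonneg (Real.cos ((a + b) / 2)), abs_nonneg (Real.sin ((a - b) / 2)),
    abs_nonneg (a - b), mul_le_mul h2 h1 (abs_nonneg _) zero_le_one]

lemma arctan_lip (a b : ℝ) : |Real.arctan a - Real.arctan b| ≤ |a - b| := by
  have h : LipschitzWith 1 Real.arctan := by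
    apply lipschitzWith_of_nnnorm_deriv_le Real.differentiable_arctan
    intro x
    rw [Real.deriv_arctan]
    rw [← NNReal.coe_le_coe, coe_nnnorm, Real.norm_eq_abs, NNReal.coe_one]
    rw [abs_of_pos (by positivity)]
    rw [div_le_one (by positivity)]
    nlinarith [sq_nonneg x]
  simpa [Real.dist_eq] using h.dist_le_mul a b

lemma half_le_sin {x : ℝ} (h0 : 0 ≤ x) (h : x ≤ π / 2) : x / 2 ≤ Real.sin x := by
  have h1 := Real.mul_le_sin h0 h
  have e : 2 / π * x * π = 2 * x := by field_simp
  nlinarith [Real.pi_pos, mul_nonneg h0 (sub_nonneg.mpr Real.pi_le_four)]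

lemma pi_lt : π < 3.15 := by
  have := Real.pi_lt_d2
  norm_num at this ⊢
  linarith

lemma theta_pi8 {D θ : ℝ} (hD : 3 ≤ D) (hθ : 0 < θ) (hDθ : (D + 1) * θ ≤ π / 2) : θ ≤ π / 8 := by
  nlinarith [mul_nonneg hθ.le (by linarith : (0:ℝ) ≤ D - 3)]

lemma theta_25 {θ : ℝ} (hθ8 : θ ≤ π/8) : θ ≤ 2/5 := by
  nlinarith [pi_lt]

lemma prod_lb {θ a b : ℝ} (ha1 : 1 - θ ≤ a) (hb1 : 1 - θ ≤ b) (hθh : θ ≤ 1/2) :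
    1 - 2*θ ≤ a * b := by
  nlinarith [mul_nonneg (by linarith : (0:ℝ) ≤ a - (1-θ)) (by linarith : (0:ℝ) ≤ b - (1-θ)),
    mul_nonneg (by linarith : (0:ℝ) ≤ 1-θ) (by linarith : (0:ℝ) ≤ a - (1-θ)),
    mul_nonneg (by linarith : (0:ℝ) ≤ 1-θ) (by linarith : (0:ℝ) ≤ b - (1-θ)), sq_nonneg θ]

lemma prod_ub {θ a b : ℝ} (ha2 : a ≤ 1) (hb1 : 1 - θ ≤ b) (hb2 : b ≤ 1) (hθh : θ ≤ 1/2) :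
    a * b ≤ 1 := by nlinarith

lemma den_lb {D θ P s β : ℝ} (hD : 3 ≤ D) (hθ : 0 < θ) (hθ25 : θ ≤ 2/5)
    (hP : 1 - 2*θ ≤ P) (hβ : (D - 1) * θ ≤ β) (hs : β/2 ≤ s) :
    D*θ/15 ≤ P * s := by
  have e1 : (1-2*θ) * ((D-1)*θ/2) ≤ P * s :=
    mul_le_mul hP (by linarith) (by nlinarith) (by linarith)
  nlinarith [mul_nonneg (mul_nonneg hθ.le (by linarith : (0:ℝ) ≤ D - 1)) (by linarith : (0:ℝ) ≤ 2/5 - θ),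
    mul_nonneg hθ.le (by linarith : (0:ℝ) ≤ D - 3)]

lemma num_ub {D θ P c β : ℝ} (hD : 3 ≤ D) (hθ : 0 < θ)
    (hPl : 1 - 2*θ ≤ P) (hcn : 0 ≤ c) (hcu : c ≤ 1) (hcl : 1 - β^2/2 ≤ c)
    (hβsq : β^2 ≤ (π/2) * ((D+1)*θ)) :
    1 - P * c ≤ 1.75*D*θ := by
  nlinarith [mul_nonneg (by linarith : (0:ℝ) ≤ P - (1-2*θ)) hcn,
    mul_nonneg (by linarith : (0:ℝ) ≤ 2*θ) (by linarith : (0:ℝ) ≤ 1 - c),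
    mul_nonneg (sub_nonneg.mpr pi_lt.le) (mul_nonneg (by linarith : (0:ℝ) ≤ D+1) hθ.le),
    mul_nonneg hθ.le (by linarith : (0:ℝ) ≤ D - 3)]

lemma beta_sq {D θ β : ℝ} (hθ : 0 < θ) (hDθ : (D+1)*θ ≤ π/2)
    (hc2 : β ≤ (D+1)*θ) (hβ0 : 0 < β) : β^2 ≤ (π/2) * ((D+1)*θ) := by
  nlinarith

lemma diff_bd {θ b₁ b₂ c₁ c₂ : ℝ} (hb : |b₂ - b₁| ≤ θ) (hb1 : 0 ≤ b₁) (hb2 : b₁ ≤ 1)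
    (hc : |c₂ - c₁| ≤ 2*θ) (hcb : |c₂| ≤ 1) :
    |b₂ * c₂ - b₁ * c₁| ≤ 3*θ := by
  have e : b₂ * c₂ - b₁ * c₁ = (b₂ - b₁) * c₂ + b₁ * (c₂ - c₁) := by ring
  rw [e]
  have t1 : |(b₂ - b₁) * c₂| ≤ θ := by
    rw [abs_mul]
    nlinarith [abs_nonneg (b₂ - b₁), abs_nonneg c₂]
  have t2 : |b₁ * (c₂ - c₁)| ≤ 2*θ := by
    rw [abs_mul, _root_.abs_of_nonneg hb1]
    nlinarith [abs_nonneg (c₂ - c₁)]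
  calc |(b₂ - b₁) * c₂ + b₁ * (c₂ - c₁)| ≤ |(b₂ - b₁) * c₂| + |b₁ * (c₂ - c₁)| := abs_add_le _ _
    _ ≤ 3*θ := by linarith

/-! ### The key variation estimate for the slope of `1 - z w̄` -/

set_option maxHeartbeats 1000000 in
lemma s_est (D θ a b₁ b₂ β₁ β₂ : ℝ)
    (hD : 3 ≤ D) (hθ : 0 < θ) (hDθ : (D + 1) * θ ≤ π / 2)
    (ha1 : 1 - θ ≤ a) (ha2 : a ≤ 1)
    (hb11 : 1 - θ ≤ b₁) (hb12 : b₁ ≤ 1)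
    (hb21 : 1 - θ ≤ b₂) (hb22 : b₂ ≤ 1)
    (hc11 : (D - 1) * θ ≤ β₁) (hc12 : β₁ ≤ (D + 1) * θ)
    (hc21 : (D - 1) * θ ≤ β₂) (hc22 : β₂ ≤ (D + 1) * θ) :
    |(1 - a * b₁ * Real.cos β₁) / (a * b₁ * Real.sin β₁) -
      (1 - a * b₂ * Real.cos β₂) / (a * b₂ * Real.sin β₂)| ≤ 1300 / D := by
  have hθ8 : θ ≤ π / 8 := theta_pi8 hD hθ hDθ
  have hθ25 : θ ≤ 2/5 := theta_25 hθ8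
  have hθh : θ ≤ 1/2 := by linarith
  have ha0 : (0:ℝ) < a := by linarith
  have hb10 : (0:ℝ) < b₁ := by linarith
  have hb20 : (0:ℝ) < b₂ := by linarith
  have hP1l : 1 - 2*θ ≤ a * b₁ := prod_lb ha1 hb11 hθh
  have hP2l : 1 - 2*θ ≤ a * b₂ := prod_lb ha1 hb21 hθh
  have hP2u : a * b₂ ≤ 1 := prod_ub ha2 hb21 hb22 hθh
  have hβ10 : 0 < β₁ := lt_of_lt_of_le (by nlinarith) hc11
  have hβ20 : 0 < β₂ := lt_of_lt_of_le (by nlinarith) hc21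
  have hβ1π : β₁ ≤ π/2 := le_trans hc12 hDθ
  have hβ2π : β₂ ≤ π/2 := le_trans hc22 hDθ
  have hs1 : β₁/2 ≤ Real.sin β₁ := half_le_sin hβ10.le hβ1π
  have hs2 : β₂/2 ≤ Real.sin β₂ := half_le_sin hβ20.le hβ2π
  have hcos2n : 0 ≤ Real.cos β₂ := Real.cos_nonneg_of_mem_Icc ⟨by linarith, hβ2π⟩
  set N₁ := 1 - a * b₁ * Real.cos β₁ with hN₁
  set N₂ := 1 - a * b₂ * Real.cos β₂ with hN₂
  set D₁ := a * b₁ * Real.sin β₁ with hD₁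
  set D₂ := a * b₂ * Real.sin β₂ with hD₂
  have hden1 : D*θ/15 ≤ D₁ := den_lb hD hθ hθ25 hP1l hc11 hs1
  have hden2 : D*θ/15 ≤ D₂ := den_lb hD hθ hθ25 hP2l hc21 hs2
  have hD0 : (0:ℝ) < D := by linarith
  have hD10 : 0 < D₁ := lt_of_lt_of_le (by positivity) hden1
  have hD20 : 0 < D₂ := lt_of_lt_of_le (by positivity) hden2
  have hN20 : 0 ≤ N₂ := by
    have : a * b₂ * Real.cos β₂ ≤ 1 := by
      calc a * b₂ * Real.cos β₂ ≤ 1 * Real.cos β₂ := by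
            exact mul_le_mul_of_nonneg_right hP2u hcos2n
        _ ≤ 1 := by rw [one_mul]; exact Real.cos_le_one _
    simp only [hN₂]; linarith
  have hNu2 : N₂ ≤ 1.75*D*θ :=
    num_ub hD hθ hP2l hcos2n (Real.cos_le_one _) Real.one_sub_sq_div_two_le_cos
      (beta_sq hθ hDθ hc22 hβ20)
  have hbd : |b₂ - b₁| ≤ θ := abs_le.mpr ⟨by linarith, by linarith⟩
  have hβd : |β₂ - β₁| ≤ 2*θ := abs_le.mpr ⟨by linarith, by linarith⟩
  have hdN : |N₁ - N₂| ≤ 3*θ := by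
    have e : N₁ - N₂ = a * (b₂ * Real.cos β₂ - b₁ * Real.cos β₁) := by
      rw [hN₁, hN₂]; ring
    rw [e, abs_mul, abs_of_pos ha0]
    have e2 : |b₂ * Real.cos β₂ - b₁ * Real.cos β₁| ≤ 3*θ :=
      diff_bd hbd hb10.le hb12 ((cos_lip β₂ β₁).trans hβd) (Real.abs_cos_le_one _)
    calc a * |b₂ * Real.cos β₂ - b₁ * Real.cos β₁|
        ≤ 1 * |b₂ * Real.cos β₂ - b₁ * Real.cos β₁| :=
          mul_le_mul_of_nonneg_right ha2 (abs_nonneg _)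
      _ ≤ 3*θ := by rw [one_mul]; exact e2
  have hdD : |D₂ - D₁| ≤ 3*θ := by
    have e : D₂ - D₁ = a * (b₂ * Real.sin β₂ - b₁ * Real.sin β₁) := by
      rw [hD₁, hD₂]; ring
    rw [e, abs_mul, abs_of_pos ha0]
    have e2 : |b₂ * Real.sin β₂ - b₁ * Real.sin β₁| ≤ 3*θ :=
      diff_bd hbd hb10.le hb12 ((sin_lip β₂ β₁).trans hβd) (Real.abs_sin_le_one _)
    calc a * |b₂ * Real.sin β₂ - b₁ * Real.sin β₁|
        ≤ 1 * |b₂ * Real.sin β₂ - b₁ * Real.sin β₁| :=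
          mul_le_mul_of_nonneg_right ha2 (abs_nonneg _)
      _ ≤ 3*θ := by rw [one_mul]; exact e2
  have key : N₁/D₁ - N₂/D₂ = (N₁ - N₂)/D₁ + (N₂/D₂) * ((D₂ - D₁)/D₁) := by
    field_simp
    ring
  have hratio : N₂/D₂ ≤ 27 := by
    rw [div_le_iff₀ hD20]
    calc N₂ ≤ 1.75*D*θ := hNu2
      _ ≤ 27 * (D*θ/15) := by nlinarith [mul_pos hD0 hθ]
      _ ≤ 27 * D₂ := by linarith
  have e45 : (3*θ)/(D*θ/15) = 45/D := by
    field_simp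
    ring
  have t1 : |N₁ - N₂|/D₁ ≤ 45/D := by
    have h := div_le_div₀ (by positivity) hdN (by positivity) hden1
    rw [e45] at h
    exact h
  have t2 : |D₂ - D₁|/D₁ ≤ 45/D := by
    have h := div_le_div₀ (by positivity) hdD (by positivity) hden1
    rw [e45] at h
    exact h
  rw [key]
  have h45 : (0:ℝ) ≤ 45/D := by positivity
  calc |(N₁ - N₂)/D₁ + (N₂/D₂) * ((D₂ - D₁)/D₁)|
      ≤ |(N₁ - N₂)/D₁| + |(N₂/D₂) * ((D₂ - D₁)/D₁)| := abs_add_le _ _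
    _ = |N₁ - N₂|/D₁ + (N₂/D₂) * (|D₂ - D₁|/D₁) := by
        rw [abs_div, abs_of_pos hD10, abs_mul, abs_div, abs_div, abs_of_pos hD10,
          abs_of_pos hD20, _root_.abs_of_nonneg hN20]
    _ ≤ 45/D + 27 * (45/D) := by
        have := mul_le_mul hratio t2 (by positivity) (by norm_num)
        linarith
    _ = 1260/D := by ring
    _ ≤ 1300/D := by gcongr <;> norm_num

/-! ### Complex lemmas -/

lemma arg_formula (P β : ℝ) (hP0 : 0 < P) (hP1 : P < 1) (hβ0 : 0 < β) (hβ : β ≤ π/2) :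
    Complex.arg (1 - (P : ℂ) * Complex.exp ((β : ℝ) * Complex.I)) =
      Real.arctan ((1 - P * Real.cos β) / (P * Real.sin β)) - π / 2 := by
  set u := 1 - (P : ℂ) * Complex.exp ((β : ℝ) * Complex.I) with hu
  have hre : u.re = 1 - P * Real.cos β := by
    simp [hu, Complex.exp_ofReal_mul_I_re, Complex.exp_ofReal_mul_I_im]
  have him : u.im = -(P * Real.sin β) := by
    simp [hu, Complex.exp_ofReal_mul_I_re, Complex.exp_ofReal_mul_I_im]
  have hsin : 0 < Real.sin β := Real.sin_pos_of_pos_of_lt_pi hβ0 (by linarith [Real.pi_pos])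
  have hcos : Real.cos β ≤ 1 := Real.cos_le_one β
  have hrepos : 0 < u.re := by
    rw [hre]
    nlinarith
  have habs : |Complex.arg u| < π/2 := Complex.abs_arg_lt_pi_div_two_iff.mpr (Or.inl hrepos)
  have htan := Complex.tan_arg u
  have harg : Complex.arg u = Real.arctan (u.im / u.re) := by
    rw [← htan, Real.arctan_tan (by linarith [abs_lt.mp habs]) (by linarith [abs_lt.mp habs])]
  have hnum : (0:ℝ) < 1 - P * Real.cos β := by nlinarith
  have hx : (0:ℝ) < (1 - P * Real.cos β) / (P * Real.sin β) :=
    div_pos hnum (by positivity)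
  have hinv := Real.arctan_inv_of_pos hx
  have hinveq : ((1 - P * Real.cos β) / (P * Real.sin β))⁻¹ =
      (P * Real.sin β) / (1 - P * Real.cos β) := by rw [inv_div]
  rw [harg, hre, him]
  have e : -(P * Real.sin β) / (1 - P * Real.cos β) =
      -((P * Real.sin β) / (1 - P * Real.cos β)) := by ring
  rw [e, Real.arctan_neg, ← hinveq, hinv]
  ring

lemma key_re (α t P β : ℝ) (hα : 0 < α) (hP0 : 0 < P) (hP1 : P < 1) (hβ0 : 0 < β)
    (hβ : β ≤ π/2)
    (ht : |t - α * Complex.arg (1 - (P : ℂ) * Complex.exp ((β : ℝ) * Complex.I))| ≤ 1) :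
    (1/2) * (‖1 - (P : ℂ) * Complex.exp ((β : ℝ) * Complex.I)‖) ^ (-α) ≤
      (Complex.exp ((t : ℝ) * Complex.I) *
        (1 - (P : ℂ) * Complex.exp ((β : ℝ) * Complex.I)) ^ (-(α:ℂ))).re := by
  set u := 1 - (P : ℂ) * Complex.exp ((β : ℝ) * Complex.I) with hu
  have hsin : 0 < Real.sin β := Real.sin_pos_of_pos_of_lt_pi hβ0 (by linarith [Real.pi_pos])
  have hcos : Real.cos β ≤ 1 := Real.cos_le_one β
  have hre : u.re = 1 - P * Real.cos β := by
    simp [hu, Complex.exp_ofReal_mul_I_re, Complex.exp_ofReal_mul_I_im]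
  have hrepos : 0 < u.re := by rw [hre]; nlinarith
  have hu0 : u ≠ 0 := by
    intro h; rw [h] at hrepos; simp at hrepos
  have habs0 : 0 < ‖u‖ := norm_pos_iff.mpr hu0
  have hcpow : u ^ (-(α:ℂ)) = Complex.exp (Complex.log u * (-(α:ℂ))) :=
    Complex.cpow_def_of_ne_zero hu0 _
  have hmul : Complex.exp ((t : ℝ) * Complex.I) * u ^ (-(α:ℂ)) =
      Complex.exp ((t : ℝ) * Complex.I + Complex.log u * (-(α:ℂ))) := by
    rw [hcpow, Complex.exp_add]
  rw [hmul, Complex.exp_re]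
  have hree : ((t : ℝ) * Complex.I + Complex.log u * (-(α:ℂ))).re =
      -α * Real.log (‖u‖) := by
    simp [Complex.add_re, Complex.mul_re, Complex.log_re, Complex.log_im]
    ring
  have hime : ((t : ℝ) * Complex.I + Complex.log u * (-(α:ℂ))).im =
      t - α * Complex.arg u := by
    simp [Complex.add_im, Complex.mul_im, Complex.log_re, Complex.log_im]
    ring
  rw [hree, hime]
  have hexp : Real.exp (-α * Real.log (‖u‖)) = (‖u‖) ^ (-α) := by
    rw [Real.rpow_def_of_pos habs0]
    ring_nf
  rw [hexp]
  have hcosb : (1:ℝ)/2 ≤ Real.cos (t - α * Complex.arg u) := by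
    rw [← Real.cos_abs]
    have h1 : Real.cos 1 ≤ Real.cos |t - α * Complex.arg u| :=
      Real.cos_le_cos_of_nonneg_of_le_pi (abs_nonneg _)
        (by linarith [Real.pi_gt_three]) ht
    have h2 : (1:ℝ) - 1^2/2 ≤ Real.cos 1 := Real.one_sub_sq_div_two_le_cos
    norm_num at h2
    linarith
  nlinarith [Real.rpow_pos_of_pos habs0 (-α)]

lemma abs_u_le (P β θ D : ℝ) (hθ0 : 0 ≤ θ) (hP : 1 - 2*θ ≤ P) (hPu : P ≤ 1) (hP0 : 0 < P)
    (h0 : 0 ≤ β) (hβu : β ≤ (D+1)*θ) :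
    ‖1 - (P:ℂ) * Complex.exp ((β : ℝ) * Complex.I)‖ ≤ (D+3)*θ := by
  have e : 1 - (P:ℂ) * Complex.exp ((β : ℝ) * Complex.I) =
      ((1 - P : ℝ) : ℂ) + (P:ℂ) * (1 - Complex.exp ((β : ℝ) * Complex.I)) := by
    push_cast; ring
  rw [e]
  have h2 : ‖1 - Complex.exp ((β : ℝ) * Complex.I)‖ ≤ β := by
    have h2' : ‖1 - Complex.exp ((β : ℝ) * Complex.I)‖^2 = 2 - 2 * Real.cos β := by
      rw [Complex.sq_norm, Complex.normSq_apply]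
      simp [Complex.exp_ofReal_mul_I_re, Complex.exp_ofReal_mul_I_im]
      nlinarith [Real.sin_sq_add_cos_sq β]
    nlinarith [Real.one_sub_sq_div_two_le_cos (x := β),
      norm_nonneg (1 - Complex.exp ((β : ℝ) * Complex.I))]
  calc ‖((1 - P : ℝ) : ℂ) + (P:ℂ) * (1 - Complex.exp ((β : ℝ) * Complex.I))‖
      ≤ ‖((1 - P : ℝ) : ℂ)‖ +
        ‖(P:ℂ) * (1 - Complex.exp ((β : ℝ) * Complex.I))‖ :=
        norm_add_le _ _
    _ = (1 - P) + P * ‖1 - Complex.exp ((β : ℝ) * Complex.I)‖ := by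
        rw [norm_mul, Complex.norm_real, Complex.norm_real, Real.norm_eq_abs, Real.norm_eq_abs, _root_.abs_of_nonneg (by linarith),
          _root_.abs_of_nonneg hP0.le]
    _ ≤ 2*θ + 1 * β := by
        have := mul_le_mul hPu h2 (norm_nonneg _) zero_le_one
        nlinarith [mul_le_mul_of_nonneg_left h2 hP0.le]
    _ ≤ (D+3)*θ := by nlinarith

lemma abs_u_ge (P β : ℝ) (hP0 : 0 < P) (hs : 0 < Real.sin β) :
    P * Real.sin β ≤ ‖1 - (P:ℂ) * Complex.exp ((β : ℝ) * Complex.I)‖ := by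
  set u := 1 - (P:ℂ) * Complex.exp ((β : ℝ) * Complex.I) with hu
  have him : u.im = -(P * Real.sin β) := by
    simp [hu, Complex.exp_ofReal_mul_I_re, Complex.exp_ofReal_mul_I_im]
  have h := Complex.abs_im_le_norm u
  rw [him] at h
  rw [abs_neg, _root_.abs_of_nonneg (by positivity)] at h
  exact h

lemma self_div_norm (x : ℂ) (hx : x ≠ 0) :
    x / (‖x‖ : ℂ) = Complex.exp (Complex.arg x * Complex.I) := by
  rw [div_eq_iff (by simpa using hx)]
  rw [mul_comm]
  exact (Complex.norm_mul_exp_arg_mul_I x).symm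

/-! ### The ball inside the Carleson box, and the measure lower bound -/

set_option maxHeartbeats 1000000 in
lemma ball_subset_box {θ : ℝ} (hθ0 : 0 < θ) (hθ8 : θ ≤ π/8) :
    Metric.ball (((1 - θ/2 : ℝ) : ℂ) * Complex.exp ((θ/2 : ℝ) * Complex.I)) (θ/8) ⊆
      carlesonBox 0 θ := by
  intro x hx
  set c : ℂ := ((1 - θ/2 : ℝ) : ℂ) * Complex.exp ((θ/2 : ℝ) * Complex.I) with hc
  have hθ4 : θ ≤ 2/5 := by nlinarith [pi_lt]
  have habsc : ‖c‖ = 1 - θ/2 := by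
    rw [hc, norm_mul, Complex.norm_exp_ofReal_mul_I, mul_one, Complex.norm_real, Real.norm_eq_abs,
      abs_of_pos (by linarith)]
  have hdist : ‖x - c‖ < θ/8 := by
    rw [← Complex.dist_eq]; exact hx
  have habs_le : ‖x‖ < 1 - θ/2 + θ/8 := by
    calc ‖x‖ ≤ ‖c‖ + ‖x - c‖ := by
          have := norm_add_le c (x - c); simpa using this
      _ < 1 - θ/2 + θ/8 := by rw [habsc]; linarith
  have habs_ge : 1 - θ/2 - θ/8 < ‖x‖ := by
    have h1 : ‖c‖ ≤ ‖x‖ + ‖c - x‖ := by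
      have := norm_add_le x (c - x); simpa using this
    have h2 : ‖c - x‖ < θ/8 := by
      rw [show c - x = -(x - c) by ring, norm_neg]; exact hdist
    rw [habsc] at h1; linarith
  have hx0 : x ≠ 0 := by
    intro h
    rw [h] at habs_ge
    simp at habs_ge
    linarith
  have hexre : (Complex.exp ((θ/2 : ℝ) * Complex.I)).re = Real.cos (θ/2) :=
    Complex.exp_ofReal_mul_I_re _
  have hexim : (Complex.exp ((θ/2 : ℝ) * Complex.I)).im = Real.sin (θ/2) :=
    Complex.exp_ofReal_mul_I_im _
  have hcre : c.re = (1 - θ/2) * Real.cos (θ/2) := by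
    rw [hc, Complex.mul_re, Complex.ofReal_re, Complex.ofReal_im, hexre, hexim]; ring
  have hcim : c.im = (1 - θ/2) * Real.sin (θ/2) := by
    rw [hc, Complex.mul_im, Complex.ofReal_re, Complex.ofReal_im, hexre, hexim]; ring
  have hxre : |x.re - c.re| < θ/8 :=
    lt_of_le_of_lt (by simpa using Complex.abs_re_le_norm (x - c)) hdist
  have hxim : |x.im - c.im| < θ/8 :=
    lt_of_le_of_lt (by simpa using Complex.abs_im_le_norm (x - c)) hdist
  have hcos : Real.cos (θ/2) ≥ 1 - (θ/2)^2/2 := Real.one_sub_sq_div_two_le_cos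
  have hsin_l : Real.sin (θ/2) ≥ θ/4 := by
    have := half_le_sin (x := θ/2) (by linarith) (by nlinarith [Real.pi_pos])
    linarith
  have hsin_u : Real.sin (θ/2) ≤ θ/2 := Real.sin_le (by linarith)
  have hre_l : (7:ℝ)/10 ≤ x.re := by
    have h1 : c.re ≥ (1 - θ/2) * (1 - (θ/2)^2/2) := by
      rw [hcre]
      apply mul_le_mul_of_nonneg_left hcos (by linarith)
    have := abs_lt.mp hxre
    nlinarith [mul_nonneg hθ0.le (sq_nonneg θ), sq_nonneg θ]
  have him_l : 0 < x.im := by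
    have h1 : c.im ≥ (1 - θ/2) * (θ/4) := by
      rw [hcim]
      apply mul_le_mul_of_nonneg_left hsin_l (by linarith)
    have := abs_lt.mp hxim
    nlinarith [mul_nonneg hθ0.le (by linarith : (0:ℝ) ≤ 1 - θ)]
  have him_u : x.im < 5*θ/8 := by
    have h1 : c.im ≤ θ/2 := by
      rw [hcim]
      nlinarith [Real.sin_nonneg_of_nonneg_of_le_pi (x := θ/2) (by linarith)
        (by nlinarith [Real.pi_pos])]
    have := abs_lt.mp hxim
    linarith
  have hrepos : 0 < x.re := by linarith
  have habsarg : |Complex.arg x| < π/2 := Complex.abs_arg_lt_pi_div_two_iff.mpr (Or.inl hrepos)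
  have harg : Complex.arg x = Real.arctan (x.im / x.re) := by
    rw [← Complex.tan_arg x,
      Real.arctan_tan (by linarith [abs_lt.mp habsarg]) (by linarith [abs_lt.mp habsarg])]
  have hargpos : 0 < Complex.arg x := by
    rw [harg, ← Real.arctan_zero]
    exact Real.arctan_strictMono (by positivity)
  have harglt : Complex.arg x < θ := by
    have h1 : x.im / x.re < θ := by
      rw [div_lt_iff₀ hrepos]
      nlinarith [mul_nonneg hθ0.le (by linarith : (0:ℝ) ≤ x.re - 7/10)]
    have h2 : Real.arctan (x.im / x.re) ≤ x.im / x.re := by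
      have h3 := arctan_lip (x.im / x.re) 0
      simp only [Real.arctan_zero, sub_zero] at h3
      have hpos : 0 ≤ x.im / x.re := by positivity
      rw [_root_.abs_of_nonneg
          (by rw [← Real.arctan_zero]; exact Real.arctan_strictMono.monotone hpos),
        _root_.abs_of_nonneg hpos] at h3
      exact h3
    rw [harg]; linarith
  refine ⟨?_, ?_, Complex.arg x, ⟨by linarith, by linarith⟩, self_div_norm x hx0⟩
  · simp only [unitDisk, Metric.mem_ball, dist_zero_right]
    linarith
  · linarith

lemma dA_ball (c : ℂ) (r : ℝ) (hr : 0 ≤ r) : dA (Metric.ball c r) = ENNReal.ofReal (r^2) := by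
  have hπ : ENNReal.ofReal π = (NNReal.pi : ℝ≥0∞) := by
    rw [← NNReal.coe_real_pi, ENNReal.ofReal_coe_nnreal]
  rw [dA, Measure.smul_apply, smul_eq_mul, Complex.volume_ball, hπ]
  have hπ0 : (NNReal.pi : ℝ≥0∞) ≠ 0 := by
    simp [NNReal.pi_ne_zero]
  have hπt : (NNReal.pi : ℝ≥0∞) ≠ ⊤ := ENNReal.coe_ne_top
  rw [ENNReal.ofReal_pow hr]
  rw [mul_comm (ENNReal.ofReal r ^ 2) _, ← mul_assoc, ENNReal.inv_mul_cancel hπ0 hπt, one_mul]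

lemma box_finite {θ : ℝ} : dA (carlesonBox 0 θ) ≠ ⊤ := by
  have h1 : carlesonBox 0 θ ⊆ Metric.ball (0:ℂ) 1 := fun z hz => hz.1
  have h2 : dA (carlesonBox 0 θ) ≤ dA (Metric.ball (0:ℂ) 1) := measure_mono h1
  rw [dA_ball 0 1 zero_le_one] at h2
  exact ne_top_of_le_ne_top (by simp) h2

lemma box_measure_lb {θ : ℝ} (hθ0 : 0 < θ) (hθ8 : θ ≤ π/8) :
    (θ/8)^2 ≤ (dA (carlesonBox 0 θ)).toReal := by
  have h1 : dA (Metric.ball (((1 - θ/2 : ℝ) : ℂ) * Complex.exp ((θ/2 : ℝ) * Complex.I)) (θ/8)) ≤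
      dA (carlesonBox 0 θ) := measure_mono (ball_subset_box hθ0 hθ8)
  rw [dA_ball _ _ (by positivity)] at h1
  have h2 := ENNReal.toReal_mono box_finite h1
  rwa [ENNReal.toReal_ofReal (by positivity)] at h2

end S4

set_option maxHeartbeats 4000000 in
/-- Key geometric lemma: for `α > 0` there are `C₁ > 0` (depending only on `α`) and an
integer `d > 2` so that for every small `θ`, with `I = (0,θ)` and `J = (dθ,(d+1)θ)`
(arcs of the same length), every nonnegative integrable `g` supported in `Q_I` and
every `z ∈ Q_J` satisfy `|(K_α g)(z)| ≥ C₁ |Q_I|^{-α/2} ∫ g dA`. -/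
theorem stmt4 (α : ℝ) (hα : 0 < α) :
    ∃ C₁ : ℝ, 0 < C₁ ∧ ∃ d : ℕ, 2 < d ∧
      ∀ θ : ℝ, 0 < θ → ((d : ℝ) + 1) * θ < π / 2 →
        ∀ g : ℂ → ℝ, 0 ≤ g → IntegrableOn g unitDisk dA →
          (∀ w, w ∉ carlesonBox 0 θ → g w = 0) →
          ∀ z ∈ carlesonBox ((d : ℝ) * θ) θ,
            C₁ / (dA (carlesonBox 0 θ)).toReal ^ (α / 2) * (∫ w in unitDisk, g w ∂dA) ≤
              ‖Kop α (fun w => (g w : ℂ)) z‖ := by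
  obtain ⟨d, hd3, hdα⟩ : ∃ d : ℕ, 3 ≤ d ∧ 1300 * α ≤ (d : ℝ) := by
    refine ⟨max 3 ⌈1300 * α⌉₊, le_max_left _ _, ?_⟩
    calc (1300:ℝ) * α ≤ (⌈1300 * α⌉₊ : ℝ) := Nat.le_ceil _
      _ ≤ ((max 3 ⌈1300 * α⌉₊ : ℕ) : ℝ) := by exact_mod_cast le_max_right 3 ⌈1300 * α⌉₊
  refine ⟨1/2 * (8 * ((d:ℝ) + 3)) ^ (-α), by positivity, d, by omega, ?_⟩
  intro θ hθ0 hθπ g hg0 hgint hgsupp z hz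
  have hD3 : (3:ℝ) ≤ (d:ℝ) := by exact_mod_cast hd3
  have hD0 : (0:ℝ) < (d:ℝ) := by linarith
  have hDθ : ((d:ℝ) + 1) * θ ≤ π / 2 := le_of_lt hθπ
  have hθ8 : θ ≤ π/8 := S4.theta_pi8 hD3 hθ0 hDθ
  have hθ25 : θ ≤ 2/5 := S4.theta_25 hθ8
  -- data of the point z
  obtain ⟨hzD, hz1, ψ, hψmem, hψeq⟩ := hz
  obtain ⟨hψ1, hψ2⟩ := hψmem
  have hA2 : ‖z‖ < 1 := by
    simpa [unitDisk, Metric.mem_ball, Complex.dist_eq] using hzD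
  have hA1 : 1 - θ < ‖z‖ := hz1
  have hA0 : 0 < ‖z‖ := by linarith
  have hz_eq : z = ((‖z‖ : ℝ) : ℂ) * Complex.exp ((ψ : ℝ) * Complex.I) := by
    have hA0' : ((‖z‖ : ℝ) : ℂ) ≠ 0 := by
      simpa using hA0.ne'
    rw [div_eq_iff hA0'] at hψeq
    exact hψeq.trans (mul_comm _ _)
  -- reference slope and direction
  set A : ℝ := ‖z‖ with hA
  set s₀ : ℝ := (1 - A * (1 - θ/2) * Real.cos (ψ - θ/2)) /
      (A * (1 - θ/2) * Real.sin (ψ - θ/2)) with hs₀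
  set t₀ : ℝ := α * (Real.arctan s₀ - π/2) with ht₀
  set m : ℂ := Complex.exp ((t₀ : ℝ) * Complex.I) with hm
  set c' : ℝ := 1/2 * (((d:ℝ) + 3) * θ) ^ (-α) with hc'
  set M : ℝ := ((d:ℝ) * θ / 15) ^ (-α) with hM
  have hc'0 : 0 < c' := by rw [hc']; positivity
  set k : ℂ → ℂ := fun w => (1 - z * (starRingEnd ℂ) w) ^ (-(α : ℂ)) with hk
  -- pointwise estimates on the box
  have hpoint : ∀ w ∈ carlesonBox 0 θ,
      c' ≤ (m * k w).re ∧ ‖k w‖ ≤ M := by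
    intro w hw
    obtain ⟨hwD, hw1, φ, hφmem, hφeq⟩ := hw
    obtain ⟨hφ1, hφ2⟩ := hφmem
    rw [zero_add] at hφ2
    have hB2 : ‖w‖ < 1 := by
      simpa [unitDisk, Metric.mem_ball, Complex.dist_eq] using hwD
    have hB1 : 1 - θ < ‖w‖ := hw1
    have hB0 : 0 < ‖w‖ := by linarith
    have hw_eq : w = ((‖w‖ : ℝ) : ℂ) * Complex.exp ((φ : ℝ) * Complex.I) := by
      have hB0' : ((‖w‖ : ℝ) : ℂ) ≠ 0 := by simpa using hB0.ne'
      rw [div_eq_iff hB0'] at hφeq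
      exact hφeq.trans (mul_comm _ _)
    set B : ℝ := ‖w‖ with hB
    have hconj : (starRingEnd ℂ) w = (B : ℂ) * Complex.exp (((-φ : ℝ) : ℂ) * Complex.I) := by
      rw [hw_eq, map_mul, Complex.conj_ofReal, ← Complex.exp_conj]
      congr 1
      push_cast
      simp [Complex.conj_I]
    have hzw : z * (starRingEnd ℂ) w =
        ((A * B : ℝ) : ℂ) * Complex.exp (((ψ - φ : ℝ) : ℂ) * Complex.I) := by
      rw [hz_eq, hconj, mul_mul_mul_comm, ← Complex.exp_add]
      congr 1
      · push_cast; ring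
      · congr 1
        push_cast
        ring
    -- real parameters
    have hP_l : 1 - 2*θ ≤ A * B := S4.prod_lb (le_of_lt hA1) (le_of_lt hB1) (by linarith)
    have hP_u : A * B ≤ 1 := S4.prod_ub hA2.le (le_of_lt hB1) hB2.le (by linarith)
    have hP0 : 0 < A * B := mul_pos hA0 hB0
    have hP1 : A * B < 1 := by nlinarith
    have hβ_l : ((d:ℝ) - 1) * θ ≤ ψ - φ := by nlinarith
    have hβ_u : ψ - φ ≤ ((d:ℝ) + 1) * θ := by nlinarith
    have hβ0 : 0 < ψ - φ := by nlinarith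
    have hβπ : ψ - φ ≤ π/2 := le_trans hβ_u hDθ
    have hsinpos : 0 < Real.sin (ψ - φ) :=
      Real.sin_pos_of_pos_of_lt_pi hβ0 (by linarith [Real.pi_pos])
    have hueq : 1 - z * (starRingEnd ℂ) w =
        1 - ((A * B : ℝ) : ℂ) * Complex.exp (((ψ - φ : ℝ) : ℂ) * Complex.I) := by rw [hzw]
    -- argument comparison
    have harg := S4.arg_formula (A*B) (ψ - φ) hP0 hP1 hβ0 hβπ
    have hsdiff : |(1 - A * B * Real.cos (ψ - φ)) / (A * B * Real.sin (ψ - φ)) - s₀| ≤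
        1300 / (d:ℝ) := by
      rw [hs₀]
      exact S4.s_est (d:ℝ) θ A B (1 - θ/2) (ψ - φ) (ψ - θ/2) hD3 hθ0 hDθ
        (le_of_lt hA1) hA2.le (le_of_lt hB1) hB2.le (by linarith) (by linarith)
        hβ_l hβ_u (by nlinarith) (by nlinarith)
    have ht : |t₀ - α * Complex.arg (1 - ((A*B : ℝ) : ℂ) *
        Complex.exp (((ψ - φ : ℝ) : ℂ) * Complex.I))| ≤ 1 := by
      rw [harg]
      have e : t₀ - α * (Real.arctan ((1 - A * B * Real.cos (ψ - φ)) /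
          (A * B * Real.sin (ψ - φ))) - π/2) =
          α * (Real.arctan s₀ - Real.arctan ((1 - A * B * Real.cos (ψ - φ)) /
          (A * B * Real.sin (ψ - φ)))) := by
        rw [ht₀]; ring
      rw [e, abs_mul, _root_.abs_of_pos hα]
      have h1 : |Real.arctan s₀ - Real.arctan ((1 - A * B * Real.cos (ψ - φ)) /
          (A * B * Real.sin (ψ - φ)))| ≤ 1300 / (d:ℝ) := by
        refine le_trans (S4.arctan_lip _ _) ?_
        rw [abs_sub_comm]
        exact hsdiff
      calc α * |Real.arctan s₀ - Real.arctan ((1 - A * B * Real.cos (ψ - φ)) /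
          (A * B * Real.sin (ψ - φ)))| ≤ α * (1300 / (d:ℝ)) :=
            mul_le_mul_of_nonneg_left h1 hα.le
        _ ≤ 1 := by
            rw [mul_div_assoc'] 
            rw [div_le_one hD0]
            linarith
    have hkey := S4.key_re α t₀ (A*B) (ψ - φ) hα hP0 hP1 hβ0 hβπ ht
    have hub := S4.abs_u_le (A*B) (ψ - φ) θ (d:ℝ) hθ0.le hP_l hP_u hP0 hβ0.le hβ_u
    have hlb : (d:ℝ)*θ/15 ≤ ‖1 - ((A*B : ℝ) : ℂ) *
        Complex.exp (((ψ - φ : ℝ) : ℂ) * Complex.I)‖ :=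
      le_trans (S4.den_lb hD3 hθ0 hθ25 hP_l hβ_l (S4.half_le_sin hβ0.le hβπ))
        (S4.abs_u_ge (A*B) (ψ - φ) hP0 hsinpos)
    have habs0 : 0 < ‖1 - ((A*B : ℝ) : ℂ) *
        Complex.exp (((ψ - φ : ℝ) : ℂ) * Complex.I)‖ :=
      lt_of_lt_of_le (by positivity) hlb
    constructor
    · -- the real part bound
      have e1 : m * k w = Complex.exp ((t₀ : ℝ) * Complex.I) *
          (1 - ((A*B : ℝ) : ℂ) * Complex.exp (((ψ - φ : ℝ) : ℂ) * Complex.I)) ^ (-(α:ℂ)) := by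
        rw [hm, hk]
        simp only []
        rw [hueq]
      rw [e1]
      refine le_trans ?_ hkey
      have h2 := Real.rpow_le_rpow_of_nonpos habs0 hub (by linarith : -α ≤ 0)
      rw [hc']
      linarith
    · -- the norm bound
      have hne : (1 - ((A*B : ℝ) : ℂ) * Complex.exp (((ψ - φ : ℝ) : ℂ) * Complex.I)) ≠ 0 := by
        intro h
        rw [h] at habs0
        simp at habs0
      have e1 : k w = (1 - ((A*B : ℝ) : ℂ) *
          Complex.exp (((ψ - φ : ℝ) : ℂ) * Complex.I)) ^ (-(α:ℂ)) := by
        rw [hk]; simp only []; rw [hueq]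
      rw [e1, Complex.norm_cpow_of_ne_zero hne]
      simp only [Complex.neg_re, Complex.ofReal_re, Complex.neg_im, Complex.ofReal_im, neg_zero,
        mul_zero, Real.exp_zero, div_one]
      rw [hM]
      exact Real.rpow_le_rpow_of_nonpos (by positivity) hlb (by linarith)
  -- measurability and integrability
  have hmeas_base : Measurable fun w : ℂ => 1 - z * (starRingEnd ℂ) w := by
    exact (continuous_const.sub (continuous_const.mul Complex.continuous_conj)).measurable
  have hmeas_k : Measurable k := by
    rw [hk]
    simp only [Complex.cpow_def]
    have hαne : (-(α:ℂ)) ≠ 0 := by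
      simp only [ne_eq, neg_eq_zero, Complex.ofReal_eq_zero]
      exact hα.ne'
    refine Measurable.ite (hmeas_base (measurableSet_singleton 0)) ?_ ?_
    · simp only [if_neg hαne]
      exact measurable_const
    · exact ((Complex.measurable_log.comp hmeas_base).mul_const _).cexp
  have hg_aesm : AEStronglyMeasurable g (dA.restrict unitDisk) := hgint.aestronglyMeasurable
  have hgk_aesm : AEStronglyMeasurable (fun w => ((g w : ℂ)) * k w) (dA.restrict unitDisk) :=
    (Complex.continuous_ofReal.comp_aestronglyMeasurable hg_aesm).mul
      hmeas_k.aestronglyMeasurable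
  have hbd : ∀ w, ‖(g w : ℂ) * k w‖ ≤ M * g w := by
    intro w
    by_cases hw : w ∈ carlesonBox 0 θ
    · rw [norm_mul, Complex.norm_real, Real.norm_eq_abs, _root_.abs_of_nonneg (hg0 w)]
      rw [mul_comm M (g w)]
      refine mul_le_mul_of_nonneg_left ?_ (hg0 w)
      exact (hpoint w hw).2
    · rw [hgsupp w hw]
      simp
  have hint1 : Integrable (fun w => (g w : ℂ) * k w) (dA.restrict unitDisk) := by
    refine Integrable.mono' (hgint.const_mul M) hgk_aesm (ae_of_all _ hbd)
  have hint2 : Integrable (fun w => m * ((g w : ℂ) * k w)) (dA.restrict unitDisk) :=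
    hint1.const_mul m
  -- the chain of inequalities
  have hmabs : ‖m‖ = 1 := by rw [hm]; exact Complex.norm_exp_ofReal_mul_I _
  have step2 : m * ∫ w in unitDisk, (g w : ℂ) * k w ∂dA =
      ∫ w in unitDisk, m * ((g w : ℂ) * k w) ∂dA :=
    (MeasureTheory.integral_const_mul m _).symm
  have step3 : ∫ w in unitDisk, (m * ((g w : ℂ) * k w)).re ∂dA =
      (m * ∫ w in unitDisk, (g w : ℂ) * k w ∂dA).re := by
    rw [step2]
    simpa using _root_.integral_re hint2
  have step4 : ∫ w in unitDisk, c' * g w ∂dA ≤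
      ∫ w in unitDisk, (m * ((g w : ℂ) * k w)).re ∂dA := by
    refine setIntegral_mono_on (hgint.const_mul c') hint2.re
      measurableSet_ball ?_
    intro w hw
    by_cases hwQ : w ∈ carlesonBox 0 θ
    · have h1 := (hpoint w hwQ).1
      have e : (m * ((g w : ℂ) * k w)).re = g w * (m * k w).re := by
        rw [show m * ((g w : ℂ) * k w) = ((g w : ℝ) : ℂ) * (m * k w) by ring]
        exact Complex.re_ofReal_mul _ _
      rw [e, mul_comm c' (g w)]
      exact mul_le_mul_of_nonneg_left h1 (hg0 w)
    · rw [hgsupp w hwQ]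
      simp
  have step5 : ∫ w in unitDisk, c' * g w ∂dA = c' * ∫ w in unitDisk, g w ∂dA :=
    MeasureTheory.integral_const_mul c' _
  have step6 : (m * ∫ w in unitDisk, (g w : ℂ) * k w ∂dA).re ≤
      ‖Kop α (fun w => (g w : ℂ)) z‖ := by
    have h1 := Complex.re_le_norm (m * ∫ w in unitDisk, (g w : ℂ) * k w ∂dA)
    rw [norm_mul, hmabs, one_mul] at h1
    exact h1
  -- measure bound
  have hT : (θ/8)^2 ≤ (dA (carlesonBox 0 θ)).toReal := S4.box_measure_lb hθ0 hθ8
  have hT0 : (0:ℝ) < (θ/8)^2 := by positivity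
  have hTα : (θ/8)^α ≤ ((dA (carlesonBox 0 θ)).toReal) ^ (α/2) := by
    have h1 : (((θ/8)^2 : ℝ)) ^ (α/2) ≤ ((dA (carlesonBox 0 θ)).toReal) ^ (α/2) :=
      Real.rpow_le_rpow (by positivity) hT (by linarith)
    have h2 : (((θ/8)^2 : ℝ)) ^ (α/2) = (θ/8)^α := by
      rw [← Real.rpow_natCast (θ/8) 2, ← Real.rpow_mul (by positivity)]
      congr 1
      push_cast
      ring
    linarith [h2 ▸ h1]
  have hrp0 : (0:ℝ) < (θ/8)^α := Real.rpow_pos_of_pos (by positivity) α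
  have hC1 : 1/2 * (8 * ((d:ℝ) + 3)) ^ (-α) / ((dA (carlesonBox 0 θ)).toReal) ^ (α/2) ≤ c' := by
    have htR0 : 0 < (dA (carlesonBox 0 θ)).toReal := lt_of_lt_of_le hT0 hT
    have hX0 : 0 < ((dA (carlesonBox 0 θ)).toReal) ^ (α/2) := Real.rpow_pos_of_pos htR0 _
    have h1 : 1/2 * (8 * ((d:ℝ) + 3)) ^ (-α) / ((dA (carlesonBox 0 θ)).toReal) ^ (α/2) ≤
        1/2 * (8 * ((d:ℝ) + 3)) ^ (-α) / (θ/8)^α := by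
      rw [div_le_div_iff₀ hX0 hrp0]
      exact mul_le_mul_of_nonneg_left hTα (by positivity)
    have h2 : 1/2 * (8 * ((d:ℝ) + 3)) ^ (-α) / (θ/8)^α = c' := by
      rw [hc', div_eq_mul_inv, ← Real.rpow_neg (by positivity : (0:ℝ) ≤ θ/8), mul_assoc,
        ← Real.mul_rpow (by positivity) (by positivity),
        show (8 * ((d:ℝ) + 3)) * (θ/8) = ((d:ℝ)+3)*θ by ring]
    linarith
  have hgI0 : 0 ≤ ∫ w in unitDisk, g w ∂dA := integral_nonneg (fun w => hg0 w)
  calc 1/2 * (8 * ((d:ℝ) + 3)) ^ (-α) / (dA (carlesonBox 0 θ)).toReal ^ (α / 2) *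
        ∫ w in unitDisk, g w ∂dA
      ≤ c' * ∫ w in unitDisk, g w ∂dA := mul_le_mul_of_nonneg_right hC1 hgI0
    _ = ∫ w in unitDisk, c' * g w ∂dA := step5.symm
    _ ≤ ∫ w in unitDisk, (m * ((g w : ℂ) * k w)).re ∂dA := step4
    _ = (m * ∫ w in unitDisk, (g w : ℂ) * k w ∂dA).re := step3
    _ ≤ ‖Kop α (fun w => (g w : ℂ)) z‖ := step6
end
end

section
/- Fix d > 2 and θ > 0 with (d+1)θ < π/2, and set I = (0,θ), J = (dθ,(d+1)θ) as arcs of 𝕋. Then for every z = r₁e^{iξ₁} ∈ Q_J and λ = r₂e^{iξ₂} ∈ Q_I, one has |1 − z·conj(λ)| ≥ a(d−1)θ, where a = (2/√π)(1 − π/6). -/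
open MeasureTheory Complex Set
open scoped ENNReal Real

noncomputable section

lemma key_aux (r ξ : ℝ) : |Real.sin ξ| ≤ ‖1 - (r : ℂ) * Complex.exp (ξ * Complex.I)‖ := by
  set u : ℂ := 1 - (r : ℂ) * Complex.exp (ξ * Complex.I) with hu
  have hre : u.re = 1 - r * Real.cos ξ := by
    simp [hu, Complex.exp_mul_I, Complex.add_re, Complex.mul_re, Complex.cos_ofReal_re]
  have him : u.im = -(r * Real.sin ξ) := by
    simp [hu, Complex.exp_mul_I, Complex.mul_im, Complex.sin_ofReal_re]
  have h2 : Real.sin ξ ^ 2 ≤ ‖u‖ ^ 2 := by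
    have : ‖u‖ ^ 2 = u.re ^ 2 + u.im ^ 2 := by
      rw [Complex.sq_norm, Complex.normSq_apply]; ring
    rw [this, hre, him]
    nlinarith [sq_nonneg (Real.cos ξ - r), Real.sin_sq_add_cos_sq ξ]
  calc |Real.sin ξ| = Real.sqrt (Real.sin ξ ^ 2) := (Real.sqrt_sq_eq_abs _).symm
    _ ≤ Real.sqrt (‖u‖ ^ 2) := Real.sqrt_le_sqrt h2
    _ = ‖u‖ := Real.sqrt_sq (norm_nonneg _)

lemma decomp {z : ℂ} {t : ℝ} (h : z / (‖z‖ : ℂ) = Complex.exp (t * Complex.I)) :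
    z = (‖z‖ : ℝ) * Complex.exp (t * Complex.I) := by
  by_cases hz : z = 0
  · exfalso; rw [hz] at h; simp at h; exact (Complex.exp_ne_zero _) h.symm
  · have hn : (‖z‖ : ℂ) ≠ 0 := by
      simpa using norm_ne_zero_iff.mpr hz
    calc z = (‖z‖ : ℂ) * (z / (‖z‖ : ℂ)) := by rw [mul_div_assoc', mul_comm, mul_div_assoc, div_self hn, mul_one]
    _ = (‖z‖ : ℝ) * Complex.exp (t * Complex.I) := by rw [h]

lemma prod_eq {z w : ℂ} {t₁ t₂ : ℝ}
    (hz : z = (‖z‖ : ℝ) * Complex.exp (t₁ * Complex.I))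
    (hw : w = (‖w‖ : ℝ) * Complex.exp (t₂ * Complex.I)) :
    z * (starRingEnd ℂ) w = ((‖z‖ * ‖w‖ : ℝ) : ℂ) * Complex.exp ((t₁ - t₂) * Complex.I) := by
  conv_lhs => rw [hz, hw]
  rw [map_mul, ← Complex.exp_conj]
  have h1 : (starRingEnd ℂ) ((t₂ : ℂ) * Complex.I) = -(t₂ : ℂ) * Complex.I := by
    simp [Complex.conj_ofReal]
  rw [h1, Complex.conj_ofReal, mul_mul_mul_comm, ← Complex.exp_add]
  congr 1
  · push_cast; ring
  · congr 1; push_cast; ring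

set_option maxHeartbeats 1000000 in
/-- For `d > 2` and `(d+1)θ < π/2`, with `I = (0,θ)` and `J = (dθ,(d+1)θ)`,
every `z ∈ Q_J` and `λ ∈ Q_I` satisfy `|1 - z λ̄| ≥ a (d-1) θ`
where `a = (2/√π)(1 - π/6)`. -/
theorem stmt5 (d θ : ℝ) (hd : 2 < d) (hθ : 0 < θ) (h : (d + 1) * θ < π / 2) :
    ∀ z ∈ carlesonBox (d * θ) θ, ∀ w ∈ carlesonBox 0 θ,
      2 / Real.sqrt π * (1 - π / 6) * ((d - 1) * θ) ≤ ‖1 - z * (starRingEnd ℂ) w‖ := by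
  rintro z ⟨-, -, θ₁, hθ₁, hz3⟩ w ⟨-, -, θ₂, hθ₂, hw3⟩
  have hz := decomp hz3
  have hw := decomp hw3
  have hval := prod_eq hz hw
  rw [hval]
  set ξ : ℝ := θ₁ - θ₂ with hξ
  have hξlb : (d - 1) * θ ≤ ξ := by
    simp only [Set.mem_Ico] at hθ₁ hθ₂
    rw [hξ]; nlinarith [hθ₁.1, hθ₂.2]
  have hξub : ξ ≤ π / 2 := by
    simp only [Set.mem_Ico] at hθ₁ hθ₂
    rw [hξ]; nlinarith [hθ₁.2, hθ₂.1]
  have h0 : (0:ℝ) ≤ (d - 1) * θ := by nlinarith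
  have hhalf : (d - 1) * θ ≤ π / 2 := by nlinarith
  have hsin : Real.sin ((d - 1) * θ) ≤ Real.sin ξ := by
    apply Real.strictMonoOn_sin.monotoneOn
    · constructor <;> [linarith [Real.pi_pos]; linarith]
    · constructor <;> [linarith [Real.pi_pos]; linarith]
    · exact hξlb
  have hjordan : 2 / π * ((d - 1) * θ) ≤ Real.sin ((d - 1) * θ) :=
    Real.mul_le_sin h0 hhalf
  have hconst : 2 / Real.sqrt π * (1 - π / 6) ≤ 2 / π := by
    have hs : Real.sqrt π ^ 2 = π := Real.sq_sqrt Real.pi_pos.le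
    have hs0 : 0 < Real.sqrt π := Real.sqrt_pos.mpr Real.pi_pos
    rw [div_mul_eq_mul_div, div_le_div_iff₀ hs0 Real.pi_pos]
    nlinarith [Real.pi_gt_d6, Real.pi_lt_d2, sq_nonneg (Real.sqrt π - 7/4)]
  calc 2 / Real.sqrt π * (1 - π / 6) * ((d - 1) * θ)
      ≤ 2 / π * ((d - 1) * θ) := by
        apply mul_le_mul_of_nonneg_right hconst h0
    _ ≤ Real.sin ((d - 1) * θ) := hjordan
    _ ≤ Real.sin ξ := hsin
    _ ≤ |Real.sin ξ| := le_abs_self _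
    _ ≤ ‖1 - ((‖z‖ * ‖w‖ : ℝ) : ℂ) * Complex.exp (ξ * Complex.I)‖ := key_aux (‖z‖ * ‖w‖) ξ
    _ = ‖1 - ((‖z‖ * ‖w‖ : ℝ) : ℂ) * Complex.exp (((θ₁ : ℂ) - (θ₂ : ℂ)) * Complex.I)‖ := by
        rw [hξ]; push_cast; ring_nf
end
end

section
/- Let α > 0. There exists d₀ > 2 depending only on α such that for all d ≥ d₀ and all θ > 0 with (d+1)θ < π/2, with I = (0,θ), J = (dθ,(d+1)θ) arcs of 𝕋 and c the center of Q_I, one has for every z ∈ Q_J and λ ∈ Q_I: |(1 − z·conj(λ))^{−α} − (1 − z·conj(c))^{−α}| ≤ (1/2)|1 − z·conj(c)|^{−α}. -/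
open MeasureTheory Complex Set
open scoped ENNReal Real

noncomputable section

lemma aux_exp_diff (a b : ℝ) (h : |a - b| ≤ 1) :
    ‖Complex.exp (a * I) - Complex.exp (b * I)‖ ≤ 2 * |a - b| := by
  have h1 : Complex.exp (a * I) - Complex.exp (b * I)
      = Complex.exp (b * I) * (Complex.exp (((a - b : ℝ)) * I) - 1) := by
    rw [mul_sub, ← Complex.exp_add, mul_one]
    push_cast
    ring_nf
  rw [h1, norm_mul, Complex.norm_exp_ofReal_mul_I, one_mul]
  have h2 : ‖(((a - b : ℝ)) * I)‖ ≤ 1 := by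
    rw [norm_mul, Complex.norm_I, mul_one, Complex.norm_real, Real.norm_eq_abs]; exact h
  calc ‖Complex.exp (((a - b : ℝ)) * I) - 1‖ ≤ 2 * ‖(((a - b : ℝ)) * I)‖ :=
        Complex.norm_exp_sub_one_le h2
    _ = 2 * |a - b| := by rw [norm_mul, Complex.norm_I, mul_one, Complex.norm_real, Real.norm_eq_abs]

lemma aux_log (v : ℂ) (h : ‖v - 1‖ ≤ 1/2) : ‖Complex.log v‖ ≤ 6 * ‖v - 1‖ := by
  set ε := ‖v - 1‖ with hε
  have hε0 : 0 ≤ ε := norm_nonneg _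
  have hre1 : |v.re - 1| ≤ ε := by
    simpa using Complex.abs_re_le_norm (v - 1)
  have him : |v.im| ≤ ε := by
    simpa using Complex.abs_im_le_norm (v - 1)
  have hre2 : (1:ℝ)/2 ≤ v.re := by
    have := (abs_le.mp hre1).1; linarith
  have habs_lb : (1:ℝ)/2 ≤ ‖v‖ := le_trans hre2 (Complex.re_le_norm v)
  have habs_ub : ‖v‖ ≤ 1 + ε := by
    calc ‖v‖ = ‖(1 + (v - 1))‖ := by ring_nf
      _ ≤ 1 + ε := by
        refine le_trans (norm_add_le _ _) ?_
        simp [hε]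
  have habs_lb2 : 1 - ε ≤ ‖v‖ := by
    have := (abs_le.mp hre1).1
    linarith [Complex.re_le_norm v]
  have habspos : 0 < ‖v‖ := by linarith
  -- bound |Real.log (abs v)| ≤ 2ε
  have hlogabs : |Real.log (‖v‖)| ≤ 2 * ε := by
    rcases le_or_gt 1 (‖v‖) with hc | hc
    · rw [_root_.abs_of_nonneg (Real.log_nonneg hc)]
      have := Real.log_le_sub_one_of_pos habspos
      linarith
    · rw [abs_of_nonpos (Real.log_nonpos (by positivity) hc.le)]
      have hinv : Real.log (‖v‖)⁻¹ ≤ (‖v‖)⁻¹ - 1 :=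
        Real.log_le_sub_one_of_pos (by positivity)
      rw [Real.log_inv] at hinv
      have h2 : (‖v‖)⁻¹ ≤ 2 := by
        rw [inv_le_comm₀ habspos (by norm_num)]
        linarith
      have h3 : (‖v‖)⁻¹ - 1 = (1 - ‖v‖) * (‖v‖)⁻¹ := by
        field_simp
      nlinarith [habs_lb2, inv_nonneg.mpr habspos.le]
  -- bound |arg v| ≤ 4ε
  have hargsin : |Real.sin (Complex.arg v)| ≤ 2 * ε := by
    rw [Complex.sin_arg, abs_div, abs_of_pos habspos, div_le_iff₀ habspos]
    nlinarith
  have harg_le : |Complex.arg v| ≤ π / 2 := by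
    rw [Complex.abs_arg_le_pi_div_two_iff]; linarith
  have hsinabs : Real.sin |Complex.arg v| = |Real.sin (Complex.arg v)| := by
    rcases le_or_gt 0 (Complex.arg v) with hc | hc
    · have h1 : Complex.arg v ≤ π := by
        have := (abs_le.mp harg_le).2; linarith [Real.pi_pos]
      rw [_root_.abs_of_nonneg hc,
        _root_.abs_of_nonneg (Real.sin_nonneg_of_nonneg_of_le_pi hc h1)]
    · rw [abs_of_neg hc, Real.sin_neg, abs_of_nonpos (Real.sin_nonpos_of_nonpos_of_neg_pi_le hc.le
        (by linarith [neg_abs_le (Complex.arg v), (abs_le.mp harg_le).1, Real.pi_pos]))]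
  have harg : |Complex.arg v| ≤ 4 * ε := by
    have hms := Real.mul_le_sin (abs_nonneg (Complex.arg v)) harg_le
    rw [hsinabs] at hms
    have hπ : (2:ℝ)/π * |Complex.arg v| ≤ 2 * ε := le_trans hms hargsin
    have hπpos : 0 < π := Real.pi_pos
    have hπ4 : π ≤ 4 := by linarith [Real.pi_le_four]
    rw [div_mul_eq_mul_div, div_le_iff₀ hπpos] at hπ
    nlinarith [abs_nonneg (Complex.arg v)]
  -- combine
  calc ‖Complex.log v‖ ≤ |(Complex.log v).re| + |(Complex.log v).im| :=
        Complex.norm_le_abs_re_add_abs_im _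
    _ = |Real.log (‖v‖)| + |Complex.arg v| := by
        rw [Complex.log_re, Complex.log_im]
    _ ≤ 2 * ε + 4 * ε := add_le_add hlogabs harg
    _ = 6 * ε := by ring

lemma keybound (α : ℝ) (hα : 0 < α) (A B : ℂ) (ε : ℝ)
    (hA : 0 < A.re) (hBA : ‖B - A‖ ≤ ε * ‖A‖) (hε1 : ε ≤ 1/2) (hε2 : ε ≤ 1/(24*α)) :
    ‖B ^ (-(α:ℂ)) - A ^ (-(α:ℂ))‖ ≤ (1/2) * ‖A ^ (-(α:ℂ))‖ := by
  have hA0 : A ≠ 0 := fun h => by simp [h] at hA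
  have hAn : 0 < ‖A‖ := norm_pos_iff.mpr hA0
  have hε0 : 0 ≤ ε := by nlinarith [norm_nonneg (B - A)]
  set v := B / A with hvdef
  have hBAv : B = A * v := by rw [hvdef, mul_comm, div_mul_cancel₀ B hA0]
  have hv : ‖v - 1‖ ≤ ε := by
    have h1 : v - 1 = (B - A) / A := by rw [hvdef, eq_div_iff hA0, sub_mul, div_mul_cancel₀ B hA0, one_mul]
    rw [h1, norm_div, div_le_iff₀ hAn]
    exact hBA
  have hv2 : ‖v - 1‖ ≤ 1/2 := le_trans hv hε1
  have hvre : (1:ℝ)/2 ≤ v.re := by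
    have h1 : |v.re - 1| ≤ 1/2 := by simpa using (Complex.abs_re_le_norm (v - 1)).trans hv2
    linarith [(abs_le.mp h1).1]
  have hv0 : v ≠ 0 := fun h => by simp [h] at hvre; linarith
  have hB0 : B ≠ 0 := hBAv ▸ mul_ne_zero hA0 hv0
  have hargA : |Complex.arg A| < π/2 := abs_arg_lt_pi_div_two_iff.mpr (Or.inl hA)
  have hargv : |Complex.arg v| < π/2 := abs_arg_lt_pi_div_two_iff.mpr (Or.inl (by linarith))
  have hlog : Complex.log B = Complex.log A + Complex.log v := by
    rw [hBAv]
    refine Complex.log_mul hA0 hv0 ?_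
    constructor
    · linarith [(abs_lt.mp hargA).1, (abs_lt.mp hargv).1]
    · linarith [(abs_lt.mp hargA).2, (abs_lt.mp hargv).2, Real.pi_pos]
  have hfact : B ^ (-(α:ℂ)) = A ^ (-(α:ℂ)) * Complex.exp (Complex.log v * (-(α:ℂ))) := by
    rw [Complex.cpow_def_of_ne_zero hB0, Complex.cpow_def_of_ne_zero hA0, hlog, add_mul,
      Complex.exp_add]
  have hu : ‖Complex.log v * (-(α:ℂ))‖ ≤ 6 * ε * α := by
    rw [norm_mul, norm_neg]
    have h1 : ‖(α:ℂ)‖ = α := by rw [Complex.norm_real, Real.norm_eq_abs, abs_of_pos hα]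
    rw [h1]
    have := aux_log v hv2
    nlinarith [norm_nonneg (Complex.log v)]
  have h6 : 6 * ε * α ≤ 1/4 := by
    have h24 : 24 * α * ε ≤ 1 := by
      rw [le_div_iff₀ (by positivity)] at hε2
      linarith
    nlinarith
  have hexp : ‖Complex.exp (Complex.log v * (-(α:ℂ))) - 1‖ ≤ 1/2 := by
    have h1 : ‖Complex.log v * (-(α:ℂ))‖ ≤ 1 := by
      linarith
    have h2 := Complex.norm_exp_sub_one_le h1
    linarith
  calc ‖B ^ (-(α:ℂ)) - A ^ (-(α:ℂ))‖
      = ‖A ^ (-(α:ℂ))‖ * ‖Complex.exp (Complex.log v * (-(α:ℂ))) - 1‖ := by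
        rw [hfact, show A ^ (-(α:ℂ)) * Complex.exp (Complex.log v * (-(α:ℂ))) - A ^ (-(α:ℂ))
          = A ^ (-(α:ℂ)) * (Complex.exp (Complex.log v * (-(α:ℂ))) - 1) by ring, norm_mul]
    _ ≤ ‖A ^ (-(α:ℂ))‖ * (1/2) := mul_le_mul_of_nonneg_left hexp (norm_nonneg _)
    _ = (1/2) * ‖A ^ (-(α:ℂ))‖ := by ring

lemma conj_exp_mul_I (x : ℝ) :
    (starRingEnd ℂ) (Complex.exp (x * I)) = Complex.exp ((-x : ℝ) * I) := by
  rw [← Complex.exp_conj]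
  congr 1
  rw [map_mul, Complex.conj_ofReal, Complex.conj_I]
  push_cast; ring

lemma mul_conj_polar (ρ r s t : ℝ) :
    ((ρ:ℂ) * Complex.exp (s * I)) * (starRingEnd ℂ) ((r:ℂ) * Complex.exp (t * I))
      = ((ρ * r : ℝ):ℂ) * Complex.exp (((s - t : ℝ)) * I) := by
  rw [map_mul, Complex.conj_ofReal, conj_exp_mul_I, mul_mul_mul_comm, ← Complex.exp_add]
  congr 1
  · push_cast; ring
  · push_cast; ring

lemma one_sub_polar_im (ρ x : ℝ) :
    ((1:ℂ) - (ρ:ℂ) * Complex.exp (x * I)).im = -(ρ * Real.sin x) := by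
  simp [Complex.sub_im, Complex.mul_im, Complex.exp_ofReal_mul_I_im,
    Complex.exp_ofReal_mul_I_re]

lemma one_sub_polar_re (ρ x : ℝ) :
    ((1:ℂ) - (ρ:ℂ) * Complex.exp (x * I)).re = 1 - ρ * Real.cos x := by
  simp [Complex.sub_re, Complex.mul_re, Complex.exp_ofReal_mul_I_im,
    Complex.exp_ofReal_mul_I_re]


set_option maxHeartbeats 2000000 in
/-- For `α > 0` there is `d₀ > 2` depending only on `α` such that for all `d ≥ d₀` and
`(d+1)θ < π/2`, with `I = (0,θ)`, `J = (dθ,(d+1)θ)` and `c = (1 - θ/2)e^{iθ/2}` the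
center of `Q_I`, every `z ∈ Q_J` and `λ ∈ Q_I` satisfy
`|(1 - z λ̄)^{-α} - (1 - z c̄)^{-α}| ≤ (1/2)|1 - z c̄|^{-α}`. -/
theorem stmt7 (α : ℝ) (hα : 0 < α) :
    ∃ d₀ : ℝ, 2 < d₀ ∧
      ∀ d : ℝ, d₀ ≤ d → ∀ θ : ℝ, 0 < θ → (d + 1) * θ < π / 2 →
        ∀ z ∈ carlesonBox (d * θ) θ, ∀ w ∈ carlesonBox 0 θ,
          ‖(1 - z * (starRingEnd ℂ) w) ^ (-(α : ℂ)) -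
              (1 - z * (starRingEnd ℂ)
                (((1 - θ / 2 : ℝ) : ℂ) * Complex.exp ((θ / 2 : ℝ) * Complex.I))) ^ (-(α : ℂ))‖ ≤
            (1 / 2) * ‖(1 - z * (starRingEnd ℂ)
                (((1 - θ / 2 : ℝ) : ℂ) * Complex.exp ((θ / 2 : ℝ) * Complex.I))) ^ (-(α : ℂ))‖ := by
  refine ⟨144 * α + 28, by nlinarith, ?_⟩
  intro d hd θ hθ hdθ z hz w hw
  have hd28 : 28 ≤ d := by nlinarith
  have hdα : 144 * α ≤ d := by nlinarith
  have hπ4 : π ≤ 4 := Real.pi_le_four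
  have hπ0 : 0 < π := Real.pi_pos
  have hθ9 : θ ≤ 1 / 9 := by nlinarith
  simp only [carlesonBox, unitDisk, Set.mem_setOf_eq, Metric.mem_ball, dist_zero_right] at hz hw
  obtain ⟨hz1, hz2, s, hs, hzs⟩ := hz
  obtain ⟨hw1, hw2, t, ht, hwt⟩ := hw
  rw [Set.mem_Ico] at hs ht
  have hρ0 : (0:ℝ) < ‖z‖ := by nlinarith
  have hr0 : (0:ℝ) < ‖w‖ := by nlinarith
  have hzeq : z = (‖z‖:ℂ) * Complex.exp (s * I) := by
    rw [div_eq_iff (by exact_mod_cast hρ0.ne')] at hzs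
    linear_combination hzs
  have hweq : w = (‖w‖:ℂ) * Complex.exp (t * I) := by
    rw [div_eq_iff (by exact_mod_cast hr0.ne')] at hwt
    linear_combination hwt
  set A : ℂ := 1 - z * (starRingEnd ℂ)
      (((1 - θ / 2 : ℝ) : ℂ) * Complex.exp ((θ / 2 : ℝ) * Complex.I)) with hA
  set B : ℂ := 1 - z * (starRingEnd ℂ) w with hB
  have hzc : z * (starRingEnd ℂ)
      (((1 - θ / 2 : ℝ) : ℂ) * Complex.exp ((θ / 2 : ℝ) * Complex.I))
      = ((‖z‖ * (1 - θ/2) : ℝ):ℂ) * Complex.exp (((s - θ/2 : ℝ)) * I) := by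
    conv_lhs => rw [hzeq]
    exact mul_conj_polar _ _ _ _
  -- bounds on the auxiliary angle
  have hφ0 : 0 ≤ s - θ/2 := by nlinarith [hs.1]
  have hφπ : s - θ/2 ≤ π / 2 := by nlinarith [hs.2]
  set ρ' : ℝ := ‖z‖ * (1 - θ/2) with hρ'
  have hρ'lb : (3:ℝ)/4 ≤ ρ' := by nlinarith
  have hρ'ub : ρ' < 1 := by nlinarith
  have hρ'0 : 0 ≤ ρ' := by nlinarith
  -- Re A > 0
  have hAre : 0 < A.re := by
    rw [hA, hzc, one_sub_polar_re]
    nlinarith [Real.cos_le_one (s - θ/2), Real.neg_one_le_cos (s - θ/2)]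
  -- lower bound for ‖A‖
  have hAlb : (1/4) * (d * θ) ≤ ‖A‖ := by
    have hsin : 2 / π * (s - θ/2) ≤ Real.sin (s - θ/2) := Real.mul_le_sin hφ0 hφπ
    have hsin2 : (1/2) * (s - θ/2) ≤ Real.sin (s - θ/2) := by
      have h1 : (1:ℝ)/2 ≤ 2 / π := by
        rw [le_div_iff₀ hπ0]; nlinarith
      nlinarith
    have him : |A.im| = ρ' * Real.sin (s - θ/2) := by
      rw [hA, hzc, one_sub_polar_im, abs_neg, _root_.abs_of_nonneg]
      nlinarith
    have h2 : |A.im| ≤ ‖A‖ := by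
      exact Complex.abs_im_le_norm A
    rw [him] at h2
    nlinarith [hs.1]
  -- difference bound
  have hdiff : ‖B - A‖ ≤ (3/2) * θ := by
    have hBA : B - A = z * (starRingEnd ℂ)
        ((((1 - θ / 2 : ℝ) : ℂ) * Complex.exp ((θ / 2 : ℝ) * Complex.I)) - w) := by
      rw [hA, hB, map_sub]; ring
    rw [hBA, norm_mul, RCLike.norm_conj]
    have hcw : ‖(((1 - θ / 2 : ℝ) : ℂ) * Complex.exp ((θ / 2 : ℝ) * Complex.I)) - w‖
        ≤ (3/2) * θ := by
      rw [hweq]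
      have hsplit : (((1 - θ / 2 : ℝ) : ℂ) * Complex.exp ((θ / 2 : ℝ) * Complex.I))
          - (‖w‖:ℂ) * Complex.exp (t * I)
          = (((1 - θ/2 - ‖w‖ : ℝ)):ℂ) * Complex.exp ((θ / 2 : ℝ) * Complex.I)
            + (‖w‖:ℂ) * (Complex.exp ((θ / 2 : ℝ) * Complex.I) - Complex.exp (t * I)) := by
        push_cast; ring
      rw [hsplit]
      have h1 : ‖(((1 - θ/2 - ‖w‖ : ℝ)):ℂ) * Complex.exp ((θ / 2 : ℝ) * Complex.I)‖ ≤ θ/2 := by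
        rw [norm_mul, Complex.norm_exp_ofReal_mul_I,
          mul_one, Complex.norm_real, Real.norm_eq_abs]
        rw [abs_le]
        constructor <;> nlinarith [ht.1, ht.2, hw1, hw2]
      have h2 : ‖(‖w‖:ℂ) * (Complex.exp ((θ / 2 : ℝ) * Complex.I) - Complex.exp (t * I))‖
          ≤ θ := by
        rw [norm_mul, Complex.norm_real, Real.norm_eq_abs, abs_of_pos hr0]
        have h3 : |θ/2 - t| ≤ θ/2 := by
          rw [abs_le]; constructor <;> nlinarith [ht.1, ht.2]
        have h4 := aux_exp_diff (θ/2) t (by rw [abs_le]; constructor <;> nlinarith [ht.1, ht.2])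
        nlinarith [norm_nonneg (Complex.exp ((θ / 2 : ℝ) * Complex.I) - Complex.exp (t * I))]
      calc ‖_ + _‖ ≤ _ + _ := norm_add_le _ _
        _ ≤ θ/2 + θ := add_le_add h1 h2
        _ = (3/2) * θ := by ring
    calc ‖z‖ * ‖(((1 - θ / 2 : ℝ) : ℂ) * Complex.exp ((θ / 2 : ℝ) * Complex.I)) - w‖
        ≤ 1 * ((3/2) * θ) := by
          apply mul_le_mul hz1.le hcw (norm_nonneg _) (by norm_num)
      _ = (3/2) * θ := by ring
  -- apply the key bound
  have hmain := keybound α hα A B (6/d) hAre ?_ ?_ ?_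
  · exact hmain
  · calc ‖B - A‖ ≤ (3/2) * θ := hdiff
      _ = (6/d) * ((1/4) * (d * θ)) := by field_simp; ring
      _ ≤ (6/d) * ‖A‖ := by
          apply mul_le_mul_of_nonneg_left hAlb (by positivity)
  · rw [div_le_iff₀ (by linarith)]; nlinarith
  · rw [div_le_div_iff₀ (by linarith) (by positivity)]; nlinarith
end
end
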